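/- The spectral norm of the adjacency matrix of the sensitivity graph of the threshold function T_k on n bits (1 ≤ k ≤ n) equals sqrt(k · (n+1-k)). -/

import Mathlib

open Finset

/-- Hamming weight of a Boolean string. -/
def wt {n : ℕ} (x : Fin n → Bool) : ℕ := (univ.filter (fun i => x i = true)).card

/-- The threshold function with threshold `k` on `n` bits. -/
def Tk (n k : ℕ) (x : Fin n → Bool) : Bool := decide (k ≤ wt x)

/-- Flip the `i`-th bit of `x`. -/
def flipBit {n : ℕ} (x : Fin n → Bool) (i : Fin n) : Fin n → Bool := Function.update x i (!x i)

/-- Sensitivity of `f` at input `x`. -/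
def sens {n : ℕ} (f : (Fin n → Bool) → Bool) (x : Fin n → Bool) : ℕ :=
  (univ.filter (fun i => f (flipBit x i) ≠ f x)).card

/-- Adjacency matrix of the sensitivity graph of `f`. -/
def adjMat {n : ℕ} (f : (Fin n → Bool) → Bool) : Matrix (Fin n → Bool) (Fin n → Bool) ℝ :=
  fun x y => if hammingDist x y = 1 ∧ f x ≠ f y then 1 else 0

/-- Euclidean norm of a real vector indexed by a finite type. -/
noncomputable def enorm {ι : Type*} [Fintype ι] (v : ι → ℝ) : ℝ :=
  Real.sqrt (∑ i, v i ^ 2)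

/-- Spectral norm of a real matrix, as the maximal stretch of a nonzero vector. -/
noncomputable def specNorm {ι : Type*} [Fintype ι] [DecidableEq ι] (A : Matrix ι ι ℝ) : ℝ :=
  sSup {r : ℝ | ∃ v : ι → ℝ, v ≠ 0 ∧ r = _root_.enorm (A.mulVec v) / _root_.enorm v}



lemma flipBit_self {n : ℕ} (x : Fin n → Bool) (i : Fin n) : flipBit x i i = !x i := by
  simp [flipBit]

lemma flipBit_ne {n : ℕ} (x : Fin n → Bool) {i j : Fin n} (h : j ≠ i) : flipBit x i j = x j := by
  simp [flipBit, Function.update_of_ne h]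

lemma flipBit_flipBit {n : ℕ} (x : Fin n → Bool) (i : Fin n) : flipBit (flipBit x i) i = x := by
  funext j
  by_cases h : j = i
  · subst h; simp [flipBit_self]
  · rw [flipBit_ne _ h, flipBit_ne _ h]

lemma wt_flipBit_true {n : ℕ} (x : Fin n → Bool) (i : Fin n) (h : x i = true) :
    wt (flipBit x i) + 1 = wt x := by
  have hset : (univ.filter (fun j => flipBit x i j = true)) =
      (univ.filter (fun j => x j = true)).erase i := by
    ext j
    by_cases hji : j = i
    · subst hji; simp [flipBit_self, h]
    · simp [flipBit_ne _ hji, hji]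
  have hmem : i ∈ univ.filter (fun j => x j = true) := by simp [h]
  unfold wt
  rw [hset, card_erase_of_mem hmem]
  have := Finset.card_pos.mpr ⟨i, hmem⟩
  omega

lemma wt_flipBit_false {n : ℕ} (x : Fin n → Bool) (i : Fin n) (h : x i = false) :
    wt (flipBit x i) = wt x + 1 := by
  have hset : (univ.filter (fun j => flipBit x i j = true)) =
      insert i (univ.filter (fun j => x j = true)) := by
    ext j
    by_cases hji : j = i
    · subst hji; simp [flipBit_self, h]
    · simp [flipBit_ne _ hji, hji]
  have hmem : i ∉ univ.filter (fun j => x j = true) := by simp [h]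
  unfold wt
  rw [hset, card_insert_of_notMem hmem]

lemma hamming_one_iff {n : ℕ} (x y : Fin n → Bool) :
    hammingDist x y = 1 ↔ ∃ i, y = flipBit x i := by
  constructor
  · intro h
    rw [hammingDist, Finset.card_eq_one] at h
    obtain ⟨i, hi⟩ := h
    refine ⟨i, funext fun j => ?_⟩
    by_cases hji : j = i
    · have hmem : j ∈ ({i} : Finset (Fin n)) := by simp [hji]
      rw [← hi, mem_filter] at hmem
      rw [hji, flipBit_self]
      have h2 := hmem.2
      rw [hji] at h2
      revert h2; cases x i <;> cases y i <;> simp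
    · have : j ∉ ({i} : Finset (Fin n)) := by simp [hji]
      rw [← hi] at this
      simp only [mem_filter, mem_univ, true_and, not_not] at this
      rw [flipBit_ne _ hji, this]
  · rintro ⟨i, rfl⟩
    rw [hammingDist]
    have : ({j | x j ≠ flipBit x i j} : Finset (Fin n)) = {i} := by
      ext j
      by_cases hji : j = i
      · simp only [hji, mem_singleton, iff_true, mem_filter, mem_univ, true_and, flipBit_self]
        cases x i <;> simp
      · simp [flipBit_ne _ hji, hji]
    rw [this, card_singleton]


/-- sensitive coordinates of `Tk n k` at `x` -/
def SS (n k : ℕ) (x : Fin n → Bool) : Finset (Fin n) :=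
  univ.filter (fun i => Tk n k (flipBit x i) ≠ Tk n k x)

lemma wt_le {n : ℕ} (x : Fin n → Bool) : wt x ≤ n := by
  have := Finset.card_filter_le (univ : Finset (Fin n)) (fun i => x i = true)
  simpa [wt] using this

lemma mem_SS_iff {n k : ℕ} (hk1 : 1 ≤ k) (x : Fin n → Bool) (i : Fin n) :
    i ∈ SS n k x ↔ (wt x + 1 = k ∧ x i = false) ∨ (wt x = k ∧ x i = true) := by
  simp only [SS, mem_filter, mem_univ, true_and, Tk, ne_eq, decide_eq_decide]
  cases hxi : x i
  · rw [wt_flipBit_false x i hxi]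
    constructor
    · intro h; left; constructor; · omega
      rfl
    · rintro (⟨h, -⟩ | ⟨h, hc⟩)
      · omega
      · simp [hxi] at hc
  · have hw := wt_flipBit_true x i hxi
    constructor
    · intro h; right; exact ⟨by omega, rfl⟩
    · rintro (⟨h, hc⟩ | ⟨h, -⟩)
      · simp [hxi] at hc
      · omega

lemma SS_empty {n k : ℕ} (hk1 : 1 ≤ k) (x : Fin n → Bool)
    (h1 : wt x + 1 ≠ k) (h2 : wt x ≠ k) : SS n k x = ∅ := by
  ext i
  simp only [mem_SS_iff hk1, notMem_empty, iff_false]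
  rintro (⟨h, -⟩ | ⟨h, -⟩) <;> omega

lemma card_SS_top {n k : ℕ} (hk1 : 1 ≤ k) (x : Fin n → Bool) (h : wt x = k) :
    (SS n k x).card = k := by
  have : SS n k x = univ.filter (fun i => x i = true) := by
    ext i
    simp only [mem_SS_iff hk1, mem_filter, mem_univ, true_and]
    constructor
    · rintro (⟨h1, -⟩ | ⟨-, h2⟩)
      · omega
      · exact h2
    · intro hi; right; exact ⟨h, hi⟩
  rw [this]; exact h

lemma card_SS_bot {n k : ℕ} (hk1 : 1 ≤ k) (x : Fin n → Bool) (h : wt x + 1 = k) :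
    (SS n k x).card = n - wt x := by
  have hset : SS n k x = univ.filter (fun i => ¬ (x i = true)) := by
    ext i
    simp only [mem_SS_iff hk1, mem_filter, mem_univ, true_and, Bool.not_eq_true]
    constructor
    · rintro (⟨-, h1⟩ | ⟨h2, -⟩)
      · exact h1
      · omega
    · intro hi; left; exact ⟨h, hi⟩
  have hadd := Finset.card_filter_add_card_filter_not
    (s := (univ : Finset (Fin n))) (p := fun i => x i = true)
  rw [hset]
  have hwt : (univ.filter (fun i => x i = true)).card = wt x := rfl
  simp only [Finset.card_univ, Fintype.card_fin] at hadd
  omega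

lemma flipBit_injOn {n : ℕ} (x : Fin n → Bool) {i j : Fin n}
    (h : flipBit x i = flipBit x j) : i = j := by
  by_contra hij
  have h1 : flipBit x i i = !x i := flipBit_self x i
  have h2 : flipBit x j i = x i := flipBit_ne x (by exact hij)
  rw [h, h2] at h1
  cases x i <;> simp at h1

lemma mulVec_adj {n k : ℕ} (v : (Fin n → Bool) → ℝ) (x : Fin n → Bool) :
    (adjMat (Tk n k)).mulVec v x = ∑ i ∈ SS n k x, v (flipBit x i) := by
  rw [Matrix.mulVec, dotProduct]
  have hfilter : (univ.filter (fun y => hammingDist x y = 1 ∧ Tk n k x ≠ Tk n k y)) =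
      (SS n k x).image (flipBit x) := by
    ext y
    simp only [mem_filter, mem_univ, true_and, mem_image, SS, hamming_one_iff]
    constructor
    · rintro ⟨⟨i, rfl⟩, hne⟩
      exact ⟨i, by simp [mem_filter, hne.symm], rfl⟩
    · rintro ⟨i, hi, rfl⟩
      exact ⟨⟨i, rfl⟩, hi.symm⟩
  calc ∑ y, adjMat (Tk n k) x y * v y
      = ∑ y ∈ univ.filter (fun y => hammingDist x y = 1 ∧ Tk n k x ≠ Tk n k y), v y := by
        rw [Finset.sum_filter]
        refine Finset.sum_congr rfl fun y _ => ?_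
        rw [adjMat]
        by_cases h : hammingDist x y = 1 ∧ Tk n k x ≠ Tk n k y <;> simp [h]
    _ = ∑ i ∈ SS n k x, v (flipBit x i) := by
        rw [hfilter, Finset.sum_image]
        intro i _ j _ h
        exact flipBit_injOn x h

lemma mem_SS_flip {n k : ℕ} {x : Fin n → Bool} {i : Fin n} (h : i ∈ SS n k x) :
    i ∈ SS n k (flipBit x i) := by
  simp only [SS, mem_filter, mem_univ, true_and] at h ⊢
  rw [flipBit_flipBit]
  exact h.symm

lemma key_card_sum {n k : ℕ} (hk1 : 1 ≤ k) (hkn : k ≤ n) (x : Fin n → Bool) :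
    ∑ i ∈ SS n k x, ((SS n k (flipBit x i)).card : ℝ) ≤ (k : ℝ) * ((n : ℝ) + 1 - k) := by
  by_cases hb : wt x + 1 = k
  · have hterm : ∀ i ∈ SS n k x, ((SS n k (flipBit x i)).card : ℝ) = (k : ℝ) := by
      intro i hi
      rcases (mem_SS_iff hk1 x i).mp hi with ⟨-, hf⟩ | ⟨hw, -⟩
      · rw [card_SS_top hk1 _ (by rw [wt_flipBit_false x i hf]; omega)]
      · omega
    rw [Finset.sum_congr rfl hterm, Finset.sum_const, card_SS_bot hk1 x hb]
    have hwx : wt x = k - 1 := by omega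
    have : ((n - wt x : ℕ) : ℝ) = (n : ℝ) + 1 - k := by
      have h1 : wt x ≤ n := wt_le x
      rw [Nat.cast_sub h1]
      rw [hwx, Nat.cast_sub hk1]
      push_cast
      ring
    rw [nsmul_eq_mul, this, mul_comm]
  by_cases ht : wt x = k
  · have hterm : ∀ i ∈ SS n k x, ((SS n k (flipBit x i)).card : ℝ) = (n : ℝ) + 1 - k := by
      intro i hi
      rcases (mem_SS_iff hk1 x i).mp hi with ⟨hw, -⟩ | ⟨-, hf⟩
      · omega
      · have hw' : wt (flipBit x i) + 1 = k := by
          have := wt_flipBit_true x i hf; omega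
        rw [card_SS_bot hk1 _ hw']
        have h1 : wt (flipBit x i) ≤ n := wt_le _
        rw [Nat.cast_sub h1]
        have : (wt (flipBit x i) : ℝ) = (k : ℝ) - 1 := by
          have := hw'
          push_cast [← this]
          ring
        rw [this]
        ring
    rw [Finset.sum_congr rfl hterm, Finset.sum_const, card_SS_top hk1 x ht, nsmul_eq_mul]
  · rw [SS_empty hk1 x hb ht]
    simp only [Finset.sum_empty]
    have h1 : (1:ℝ) ≤ (k:ℝ) := by exact_mod_cast hk1
    have h2 : (k:ℝ) ≤ (n:ℝ) := by exact_mod_cast hkn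
    nlinarith

lemma sum_sq_bound {n k : ℕ} (hk1 : 1 ≤ k) (hkn : k ≤ n) (v : (Fin n → Bool) → ℝ) :
    ∑ x, ((adjMat (Tk n k)).mulVec v x) ^ 2 ≤ ((k : ℝ) * ((n : ℝ) + 1 - k)) * ∑ x, v x ^ 2 := by
  have step1 : ∑ x, ((adjMat (Tk n k)).mulVec v x) ^ 2 ≤
      ∑ x, ∑ i ∈ SS n k x, ((SS n k x).card : ℝ) * v (flipBit x i) ^ 2 := by
    refine Finset.sum_le_sum fun x _ => ?_
    rw [mulVec_adj, ← Finset.mul_sum]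
    exact sq_sum_le_card_mul_sum_sq
  have step2 : ∑ x, ∑ i ∈ SS n k x, ((SS n k x).card : ℝ) * v (flipBit x i) ^ 2 =
      ∑ x, ∑ i ∈ SS n k x, ((SS n k (flipBit x i)).card : ℝ) * v x ^ 2 := by
    rw [Finset.sum_sigma' univ _ _, Finset.sum_sigma' univ _ _]
    refine Finset.sum_nbij' (fun p => ⟨flipBit p.1 p.2, p.2⟩) (fun p => ⟨flipBit p.1 p.2, p.2⟩)
      ?_ ?_ ?_ ?_ ?_
    · rintro ⟨x, i⟩ hp
      simp only [Finset.mem_sigma, mem_univ, true_and] at hp ⊢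
      exact mem_SS_flip hp
    · rintro ⟨x, i⟩ hp
      simp only [Finset.mem_sigma, mem_univ, true_and] at hp ⊢
      exact mem_SS_flip hp
    · rintro ⟨x, i⟩ -
      simp [flipBit_flipBit]
    · rintro ⟨x, i⟩ -
      simp [flipBit_flipBit]
    · rintro ⟨x, i⟩ -
      simp [flipBit_flipBit]
  have step3 : ∑ x, ∑ i ∈ SS n k x, ((SS n k (flipBit x i)).card : ℝ) * v x ^ 2 ≤
      ((k : ℝ) * ((n : ℝ) + 1 - k)) * ∑ x, v x ^ 2 := by
    rw [Finset.mul_sum]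
    refine Finset.sum_le_sum fun x _ => ?_
    have : ∑ i ∈ SS n k x, ((SS n k (flipBit x i)).card : ℝ) * v x ^ 2 =
        (∑ i ∈ SS n k x, ((SS n k (flipBit x i)).card : ℝ)) * v x ^ 2 := by
      rw [Finset.sum_mul]
    rw [this]
    exact mul_le_mul_of_nonneg_right (key_card_sum hk1 hkn x) (sq_nonneg _)
  calc ∑ x, ((adjMat (Tk n k)).mulVec v x) ^ 2 ≤ _ := step1
    _ = _ := step2
    _ ≤ _ := step3


lemma enorm_nonneg {ι : Type*} [Fintype ι] (v : ι → ℝ) : 0 ≤ _root_.enorm v := Real.sqrt_nonneg _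

lemma vec_enorm_pos {ι : Type*} [Fintype ι] {v : ι → ℝ} (hv : v ≠ 0) : 0 < _root_.enorm v := by
  obtain ⟨i, hi⟩ : ∃ i, v i ≠ 0 := by
    by_contra h
    push_neg at h
    exact hv (funext h)
  apply Real.sqrt_pos.mpr
  have : (0:ℝ) < v i ^ 2 := by positivity
  calc (0:ℝ) < v i ^ 2 := this
    _ ≤ ∑ j, v j ^ 2 := Finset.single_le_sum (fun j _ => sq_nonneg (v j)) (Finset.mem_univ i)

lemma enorm_smul' {ι : Type*} [Fintype ι] (c : ℝ) (v : ι → ℝ) :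
    _root_.enorm (c • v) = |c| * _root_.enorm v := by
  unfold _root_.enorm
  have : ∑ i, (c • v) i ^ 2 = c ^ 2 * ∑ i, v i ^ 2 := by
    rw [Finset.mul_sum]
    refine Finset.sum_congr rfl fun i _ => ?_
    simp [mul_pow]
  rw [this, Real.sqrt_mul (sq_nonneg c), Real.sqrt_sq_eq_abs]

section Main
variable {n k : ℕ}

noncomputable def v₀ (n k : ℕ) : (Fin n → Bool) → ℝ := fun x =>
  if wt x + 1 = k then Real.sqrt ((n : ℝ) + 1 - k)
  else if wt x = k then Real.sqrt k else 0

lemma eigen (hk1 : 1 ≤ k) (hkn : k ≤ n) :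
    (adjMat (Tk n k)).mulVec (v₀ n k) =
      Real.sqrt ((k : ℝ) * ((n : ℝ) + 1 - k)) • (v₀ n k) := by
  have hkR : (0:ℝ) ≤ (k:ℝ) := by positivity
  have hnkR : (0:ℝ) ≤ (n:ℝ) + 1 - k := by
    have : (k:ℝ) ≤ (n:ℝ) := by exact_mod_cast hkn
    linarith
  have hL : Real.sqrt ((k : ℝ) * ((n : ℝ) + 1 - k)) =
      Real.sqrt (k:ℝ) * Real.sqrt ((n : ℝ) + 1 - k) := Real.sqrt_mul hkR _
  funext x
  rw [mulVec_adj]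
  simp only [Pi.smul_apply, smul_eq_mul]
  by_cases hb : wt x + 1 = k
  · have hterm : ∀ i ∈ SS n k x, v₀ n k (flipBit x i) = Real.sqrt k := by
      intro i hi
      rcases (mem_SS_iff hk1 x i).mp hi with ⟨-, hf⟩ | ⟨hw, -⟩
      · have hw' : wt (flipBit x i) = k := by rw [wt_flipBit_false x i hf]; omega
        rw [v₀, if_neg (by omega), if_pos hw']
      · omega
    rw [Finset.sum_congr rfl hterm, Finset.sum_const, card_SS_bot hk1 x hb, nsmul_eq_mul]
    have hcast : ((n - wt x : ℕ) : ℝ) = (n : ℝ) + 1 - k := by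
      have h1 : wt x ≤ n := wt_le x
      have h2 : (wt x : ℝ) = (k:ℝ) - 1 := by
        have : ((wt x + 1 : ℕ) : ℝ) = (k : ℝ) := by exact_mod_cast congrArg Nat.cast hb
        push_cast at this
        linarith
      rw [Nat.cast_sub h1, h2]
      ring
    rw [hcast]
    have hv : v₀ n k x = Real.sqrt ((n : ℝ) + 1 - k) := by rw [v₀, if_pos hb]
    rw [hv, hL]
    rw [mul_assoc, Real.mul_self_sqrt hnkR]
    ring
  by_cases ht : wt x = k
  · have hterm : ∀ i ∈ SS n k x, v₀ n k (flipBit x i) = Real.sqrt ((n : ℝ) + 1 - k) := by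
      intro i hi
      rcases (mem_SS_iff hk1 x i).mp hi with ⟨hw, -⟩ | ⟨-, hf⟩
      · omega
      · have hw' : wt (flipBit x i) + 1 = k := by
          have := wt_flipBit_true x i hf; omega
        rw [v₀, if_pos hw']
    rw [Finset.sum_congr rfl hterm, Finset.sum_const, card_SS_top hk1 x ht, nsmul_eq_mul]
    have hv : v₀ n k x = Real.sqrt k := by
      rw [v₀, if_neg (by omega), if_pos ht]
    rw [hv, hL]
    rw [mul_comm (Real.sqrt (k:ℝ)) _, mul_assoc, Real.mul_self_sqrt hkR]
    ring
  · rw [SS_empty hk1 x hb ht]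
    have hv : v₀ n k x = 0 := by rw [v₀, if_neg hb, if_neg ht]
    rw [hv]
    simp

lemma v₀_ne_zero (hk1 : 1 ≤ k) (hkn : k ≤ n) : v₀ n k ≠ 0 := by
  set x₀ : Fin n → Bool := fun i => decide (i.val < k) with hx₀
  have hwt : wt x₀ = k := by
    rw [wt]
    have : (univ.filter fun i : Fin n => x₀ i = true) =
        (univ.filter fun i : Fin n => i.val < k) := by
      ext i; simp [hx₀]
    have hcard : (univ.filter fun i : Fin n => i.val < k).card = (Finset.range k).card := by
      refine Finset.card_bij' (fun i _ => i.val) (fun j hj => ⟨j, ?_⟩) ?_ ?_ ?_ ?_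
      · have := Finset.mem_range.mp hj
        omega
      · intro i hi
        simp only [mem_filter, mem_univ, true_and] at hi
        exact Finset.mem_range.mpr hi
      · intro j hj
        simp only [mem_filter, mem_univ, true_and]
        exact Finset.mem_range.mp hj
      · intro i _; rfl
      · intro j _; rfl
    rw [this, hcard, Finset.card_range]
  intro h
  have h1 : v₀ n k x₀ = 0 := by rw [h]; rfl
  rw [v₀, if_neg (by omega), if_pos hwt] at h1
  have : (0:ℝ) < Real.sqrt k := Real.sqrt_pos.mpr (by exact_mod_cast hk1)
  linarith

end Main

theorem specNorm_threshold_eq (n k : ℕ) (hk1 : 1 ≤ k) (hkn : k ≤ n) :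
    specNorm (adjMat (Tk n k)) = Real.sqrt ((k : ℝ) * ((n : ℝ) + 1 - k)) := by
  set L := Real.sqrt ((k : ℝ) * ((n : ℝ) + 1 - k)) with hL
  have hL0 : 0 ≤ L := Real.sqrt_nonneg _
  set Sset := {r : ℝ | ∃ v : (Fin n → Bool) → ℝ, v ≠ 0 ∧
      r = _root_.enorm ((adjMat (Tk n k)).mulVec v) / _root_.enorm v} with hSset
  -- upper bound
  have hub : ∀ r ∈ Sset, r ≤ L := by
    rintro r ⟨v, hv, rfl⟩
    rw [div_le_iff₀ (vec_enorm_pos hv)]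
    have hc : (0:ℝ) ≤ (k:ℝ) * ((n:ℝ) + 1 - k) := by
      have hk' : (1:ℝ) ≤ (k:ℝ) := by exact_mod_cast hk1
      have hn' : (k:ℝ) ≤ (n:ℝ) := by exact_mod_cast hkn
      nlinarith
    unfold _root_.enorm
    rw [hL, ← Real.sqrt_mul hc]
    exact Real.sqrt_le_sqrt (sum_sq_bound hk1 hkn v)
  -- membership
  have hmem : L ∈ Sset := by
    refine ⟨v₀ n k, v₀_ne_zero hk1 hkn, ?_⟩
    rw [eigen hk1 hkn, enorm_smul', abs_of_nonneg hL0, mul_div_assoc,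
      div_self (ne_of_gt (vec_enorm_pos (v₀_ne_zero hk1 hkn))), mul_one]
  rw [specNorm]
  exact le_antisymm (csSup_le ⟨L, hmem⟩ hub) (le_csSup ⟨L, hub⟩ hmem)
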